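/- Let R be a finite commutative local ring that is not a field, with residue field F_q, and let g(x) = (x^q - x) + 1 ∈ R[x]. Then there is no unit u of the polynomial ring R[x] such that u and g induce the same function on R (although g is unit-valued on R). -/

import Mathlib

open IsLocalRing Polynomial

lemma eval_of_sq_zero {R : Type*} [CommRing R] (p : Polynomial R) {t : R} (ht : t ^ 2 = 0) :
    p.eval t = p.coeff 0 + p.coeff 1 * t := by
  rw [Polynomial.eval_eq_sum_range' (lt_of_le_of_lt (Nat.le_succ _) (Nat.lt_succ_self _))]
  rw [← Finset.sum_subset (Finset.range_subset_range.2 (by omega : 2 ≤ p.natDegree + 2))]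
  · simp [Finset.sum_range_succ]
  · intro i _ hi
    have h2 : 2 ≤ i := by simp at hi; omega
    have : t ^ i = t ^ 2 * t ^ (i - 2) := by rw [← pow_add]; congr 1; omega
    rw [this, ht, zero_mul, mul_zero]

theorem no_unit_poly_represents (R : Type*) [CommRing R] [IsLocalRing R] [Fintype R]
    (hR : ¬IsField R) (q : ℕ) (hq : q = Nat.card (IsLocalRing.ResidueField R)) :
    ((∀ a : R, IsUnit ((Polynomial.X ^ q - Polynomial.X + 1 : Polynomial R).eval a)) ∧
      ¬∃ u : Polynomial R, IsUnit u ∧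
        ∀ a : R, u.eval a = (Polynomial.X ^ q - Polynomial.X + 1 : Polynomial R).eval a) := by
  classical
  have hfin : Finite (ResidueField R) := Quotient.finite _
  have : Fintype (ResidueField R) := Fintype.ofFinite _
  have hq' : q = Fintype.card (ResidueField R) := by rw [hq, Nat.card_eq_fintype_card]
  have hq2 : 2 ≤ q := hq' ▸ Fintype.one_lt_card
  -- membership of a^q - a in the maximal ideal
  have hmem : ∀ a : R, a ^ q - a ∈ maximalIdeal R := by
    intro a
    have : (residue R) (a ^ q - a) = 0 := by
      rw [map_sub, map_pow, hq', FiniteField.pow_card, sub_self]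
    exact Ideal.Quotient.eq_zero_iff_mem.mp this
  constructor
  · intro a
    have h1 : (Polynomial.X ^ q - Polynomial.X + 1 : Polynomial R).eval a
        = 1 + (a ^ q - a) := by simp [add_comm]
    rw [h1]
    by_contra hu
    have h1m : 1 + (a ^ q - a) ∈ maximalIdeal R := hu
    have : (1 : R) ∈ maximalIdeal R := by
      have := Ideal.sub_mem _ h1m (hmem a)
      simpa using this
    exact (IsLocalRing.maximalIdeal.isMaximal R).ne_top (Ideal.eq_top_of_isUnit_mem _ this isUnit_one)
  · rintro ⟨u, hu, heq⟩
    -- find a nonzero element t of square 0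
    have hMne : maximalIdeal R ≠ ⊥ := by
      intro h
      exact hR (IsLocalRing.isField_iff_maximalIdeal_eq.mpr h)
    obtain ⟨m, hmM, hm0⟩ := Submodule.exists_mem_ne_zero_of_ne_bot hMne
    have hnilI : IsNilpotent (maximalIdeal R) := by
      rw [← IsLocalRing.jacobson_eq_maximalIdeal ⊥ bot_ne_top]
      exact IsArtinianRing.isNilpotent_jacobson_bot
    obtain ⟨k, hk⟩ := hnilI
    have hmk : m ^ k = 0 := by
      have := Ideal.pow_mem_pow hmM k
      rw [hk] at this
      simpa using this
    have hex : ∃ n, m ^ n = 0 := ⟨k, hmk⟩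
    set n := Nat.find hex with hn
    have hn0 : m ^ n = 0 := Nat.find_spec hex
    have hn2 : 2 ≤ n := by
      rcases Nat.lt_or_ge n 2 with h | h
      · interval_cases n
        · exact absurd hn0 (by simp)
        · exact absurd (by simpa using hn0) hm0
      · exact h
    set t := m ^ (n - 1) with htdef
    have ht0 : t ≠ 0 := Nat.find_min hex (by omega)
    have ht2 : t ^ 2 = 0 := by
      rw [htdef, ← pow_mul]
      have : m ^ ((n - 1) * 2) = m ^ n * m ^ ((n - 1) * 2 - n) := by
        rw [← pow_add]; congr 1; omega
      rw [this, hn0, zero_mul]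
    -- coefficients of u
    obtain ⟨hc0, hcn⟩ := (Polynomial.isUnit_iff_coeff_isUnit_isNilpotent).mp hu
    -- u.coeff 0 = 1
    have hg0 : (Polynomial.X ^ q - Polynomial.X + 1 : Polynomial R).eval 0 = 1 := by
      simp [zero_pow (by omega : q ≠ 0)]
    have hu0 : u.coeff 0 = 1 := by
      rw [Polynomial.coeff_zero_eq_eval_zero, heq 0, hg0]
    -- evaluate at t
    have hgt : (Polynomial.X ^ q - Polynomial.X + 1 : Polynomial R).eval t = 1 - t := by
      have htq : t ^ q = 0 := by
        have : t ^ q = t ^ 2 * t ^ (q - 2) := by rw [← pow_add]; congr 1; omega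
        rw [this, ht2, zero_mul]
      simp [htq, sub_add_eq_add_sub]
    have hut : u.eval t = 1 + u.coeff 1 * t := by
      rw [eval_of_sq_zero u ht2, hu0]
    have key : (1 + u.coeff 1) * t = 0 := by
      have := heq t
      rw [hut, hgt] at this
      ring_nf
      ring_nf at this
      linear_combination this
    have hunit : IsUnit (1 + u.coeff 1) := (hcn 1 one_ne_zero).isUnit_one_add
    obtain ⟨v, hv⟩ := hunit
    have : t = 0 := by
      have h2 : (↑v⁻¹ : R) * ((1 + u.coeff 1) * t) = 0 := by rw [key, mul_zero]
      rwa [← mul_assoc, ← hv, Units.inv_mul, one_mul] at h2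
    exact ht0 this
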